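/- If C is a small category satisfying the right Ore condition (every cospan can be completed to a commutative square) and J_at is the atomic Grothendieck topology on C (where a sieve covers iff it is nonempty), then the topos Sh(C, J_at) of sheaves for J_at is an atomic topos (i.e., every object is a coproduct of atoms). -/

import Mathlib

open CategoryTheory Limits

universe u

/-- The right Ore condition: every cospan can be completed to a commutative square. -/
def RightOreCondition (C : Type u) [SmallCategory C] : Prop :=
  ∀ {a b c : C} (f : a ⟶ c) (g : b ⟶ c),
    ∃ (d : C) (h : d ⟶ a) (k : d ⟶ b), h ≫ f = k ≫ g

/-- `J` is the atomic topology: a sieve covers iff it is nonempty. -/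
def IsAtomicTopology {C : Type u} [SmallCategory C] (J : GrothendieckTopology C) : Prop :=
  ∀ (c : C) (S : Sieve c), S ∈ J c ↔ ∃ (d : C) (g : d ⟶ c), S g

/-- An atom in a category: a non-initial object all of whose subobjects are trivial,
i.e. every mono into it is either an isomorphism or has initial domain. -/
def IsAtomObj {E : Type*} [Category E] (X : E) : Prop :=
  (¬ Nonempty (IsInitial X)) ∧
    ∀ (Y : E) (m : Y ⟶ X), Mono m → (Nonempty (IsInitial Y) ∨ IsIso m)

instance sheafTypeHasCoproducts {C : Type u} [SmallCategory C] (J : GrothendieckTopology C) (I : Type u) :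
    HasColimitsOfShape (Discrete I) (Sheaf J (Type u)) :=
  Sheaf.instHasColimitsOfShape

section AtomicAuxSection
open Opposite

namespace AtomicAux

variable {C : Type u} [SmallCategory C]

section
variable (P : Cᵒᵖ ⥤ Type u)

/-- Two elements are connected if they agree on a common refinement. -/
def rel (a b : Σ c : C, P.obj (op c)) : Prop :=
  ∃ (e : C) (f : e ⟶ a.1) (g : e ⟶ b.1), P.map f.op a.2 = P.map g.op b.2

theorem rel_refl (a) : rel P a a := ⟨a.1, 𝟙 a.1, 𝟙 a.1, rfl⟩

theorem rel_symm {a b} (h : rel P a b) : rel P b a := by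
  obtain ⟨e, f, g, h⟩ := h; exact ⟨e, g, f, h.symm⟩

theorem rel_trans (hOre : RightOreCondition C) {a b c} (h₁ : rel P a b) (h₂ : rel P b c) :
    rel P a c := by
  obtain ⟨e, f, g, h⟩ := h₁
  obtain ⟨e', f', g', h'⟩ := h₂
  obtain ⟨d, u, v, huv⟩ := hOre g f'
  refine ⟨d, u ≫ f, v ≫ g', ?_⟩
  have : P.map (u ≫ g).op b.2 = P.map (v ≫ f').op b.2 := by rw [huv]
  simp only [op_comp, FunctorToTypes.map_comp_apply] at this ⊢
  rw [h, this, h']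

variable (hOre : RightOreCondition C)

def relSetoid : Setoid (Σ c : C, P.obj (op c)) :=
  ⟨rel P, rel_refl P, rel_symm P, rel_trans P hOre⟩

/-- The index type: connected components of elements of `P`. -/
def Index : Type u := Quotient (relSetoid P hOre)

/-- The component subpresheaf attached to an index. -/
def Q (i : Index P hOre) : Cᵒᵖ ⥤ Type u where
  obj c := { x : P.obj c // Quotient.mk (relSetoid P hOre) ⟨c.unop, x⟩ = i }
  map {c d} f := TypeCat.ofHom fun x => ⟨P.map f x.1, by
    refine Eq.trans (Quotient.sound ?_) x.2
    exact ⟨d.unop, 𝟙 d.unop, f.unop, by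
      simp only [op_id, FunctorToTypes.map_id_apply]; rfl⟩⟩
  map_id c := by ext x; simp
  map_comp f g := by ext x; simp

/-- Inclusion of a component into `P`. -/
def ι (i : Index P hOre) : Q P hOre i ⟶ P where
  app c := TypeCat.ofHom fun x => x.1
  naturality _ _ _ := rfl


variable {J : GrothendieckTopology C}

theorem isSheaf_Q (hJ : IsAtomicTopology J) (hP : Presieve.IsSheaf J P) (i : Index P hOre) :
    Presieve.IsSheaf J (Q P hOre i) := by
  intro c S hS x hx
  let y : Presieve.FamilyOfElements P S.arrows := fun d f hf => (x f hf).1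
  have hy : y.Compatible := by
    intro Y₁ Y₂ Z g₁ g₂ f₁ f₂ h₁ h₂ comm
    exact congrArg Subtype.val (hx g₁ g₂ h₁ h₂ comm)
  obtain ⟨t, ht, huniq⟩ := hP S hS y hy
  obtain ⟨d, g, hg⟩ := (hJ c S).1 hS
  have hclass : Quotient.mk (relSetoid P hOre) ⟨c, t⟩ = i := by
    have h2 : Quotient.mk (relSetoid P hOre) ⟨d, P.map g.op t⟩ = i := by
      rw [ht g hg]; exact (x g hg).2
    refine Eq.trans (Quotient.sound ?_) h2
    exact ⟨d, g, 𝟙 d, by simp only [op_id, FunctorToTypes.map_id_apply]⟩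
  refine ⟨⟨t, hclass⟩, fun Y f hf => Subtype.ext (ht f hf), ?_⟩
  intro t' ht'
  apply Subtype.ext
  exact huniq t'.1 fun Y f hf => congrArg Subtype.val (ht' f hf)

/-- The constant presheaf at a type. -/
def K (A : Type u) : Cᵒᵖ ⥤ Type u where
  obj _ := A
  map _ := 𝟙 _

theorem isSheaf_K (hJ : IsAtomicTopology J) (hOre : RightOreCondition C) (A : Type u) :
    Presieve.IsSheaf J (K (C := C) A) := by
  intro c S hS x hx
  obtain ⟨d, g, hg⟩ := (hJ c S).1 hS
  have key : ∀ ⦃Y : C⦄ (f : Y ⟶ c) (hf : S f), x f hf = x g hg := by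
    intro Y f hf
    obtain ⟨e, u, v, huv⟩ := hOre f g
    exact hx u v hf hg huv
  refine ⟨(x g hg : A), fun Y f hf => (key f hf).symm, fun t' ht' => ht' g hg⟩

end

section Main

variable {J : GrothendieckTopology C} (hOre : RightOreCondition C) (hJ : IsAtomicTopology J)
variable (X : Sheaf J (Type u))

/-- The component sheaf. -/
def QS (i : Index X.val hOre) : Sheaf J (Type u) :=
  ⟨Q X.val hOre i, (isSheaf_iff_isSheaf_of_type _ _).2
    (isSheaf_Q X.val hOre hJ ((isSheaf_iff_isSheaf_of_type _ _).1 X.cond) i)⟩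

/-- Inclusion of a component sheaf. -/
def ιS (i : Index X.val hOre) : QS hOre hJ X i ⟶ X := ⟨ι X.val hOre i⟩

theorem desc_congr {D : Cᵒᵖ ⥤ Type u}
    (F : ∀ i : Index X.val hOre, (QS hOre hJ X i).val ⟶ D)
    {c : Cᵒᵖ} (x : X.val.obj c) {i j : Index X.val hOre}
    (hi : Quotient.mk (relSetoid X.val hOre) ⟨c.unop, x⟩ = i)
    (hj : Quotient.mk (relSetoid X.val hOre) ⟨c.unop, x⟩ = j) :
    (F i).app c ⟨x, hi⟩ = (F j).app c ⟨x, hj⟩ := by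
  subst hi; subst hj; rfl

/-- The cofan exhibiting `X` as the coproduct of its components. -/
def theCofan : Cofan (QS hOre hJ X) := Cofan.mk X (ιS hOre hJ X)

/-- Descent morphism out of `X` given maps out of the components. -/
def descHom (s : Cofan (QS hOre hJ X)) : X ⟶ s.pt where
  hom :=
  { app := fun c => TypeCat.ofHom fun x => (s.inj (Quotient.mk (relSetoid X.val hOre) ⟨c.unop, x⟩)).hom.app c ⟨x, rfl⟩
    naturality := by
      intro c d f
      ext x
      have h : Quotient.mk (relSetoid X.val hOre) ⟨d.unop, X.val.map f x⟩ =
          Quotient.mk (relSetoid X.val hOre) ⟨c.unop, x⟩ :=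
        Quotient.sound ⟨d.unop, 𝟙 d.unop, f.unop, by
          simp only [op_id, FunctorToTypes.map_id_apply]; rfl⟩
      show (s.inj (Quotient.mk (relSetoid X.val hOre) ⟨d.unop, X.val.map f x⟩)).hom.app d
          ⟨X.val.map f x, rfl⟩ =
        s.pt.val.map f ((s.inj (Quotient.mk (relSetoid X.val hOre) ⟨c.unop, x⟩)).hom.app c
          ⟨x, rfl⟩)
      rw [desc_congr hOre hJ X (fun i => (s.inj i).hom) (X.val.map f x) rfl h]
      exact NatTrans.naturality_apply ((s.inj (Quotient.mk (relSetoid X.val hOre) ⟨c.unop, x⟩)).hom) f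
        ⟨x, rfl⟩ }

noncomputable def isColimit_theCofan : IsColimit (theCofan hOre hJ X) := by
  refine mkCofanColimit _ (descHom hOre hJ X) ?_ ?_
  · intro t i
    apply Sheaf.hom_ext
    apply NatTrans.ext
    funext c; ext x
    obtain ⟨x, hx⟩ := x
    exact desc_congr hOre hJ X (fun i => (t.inj i).hom) x rfl hx
  · intro t mhom hm
    apply Sheaf.hom_ext
    apply NatTrans.ext
    funext c; ext x
    have := ConcreteCategory.congr_hom (congrArg (fun (n : _ ⟶ t.pt) => n.hom.app c)
      (hm (Quotient.mk (relSetoid X.val hOre) ⟨c.unop, x⟩))) ⟨x, rfl⟩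
    exact this

theorem QS_not_initial (i : Index X.val hOre) : ¬ Nonempty (IsInitial (QS hOre hJ X i)) := by
  rintro ⟨h⟩
  obtain ⟨⟨c, x⟩, hx⟩ := Quotient.exists_rep i
  let KB : Sheaf J (Type u) := ⟨K (ULift Bool), (isSheaf_iff_isSheaf_of_type _ _).2
    (isSheaf_K hJ hOre (ULift Bool))⟩
  let f₁ : QS hOre hJ X i ⟶ KB := ⟨{ app := fun _ => TypeCat.ofHom fun _ => ⟨true⟩, naturality := fun _ _ _ => rfl }⟩
  let f₂ : QS hOre hJ X i ⟶ KB := ⟨{ app := fun _ => TypeCat.ofHom fun _ => ⟨false⟩, naturality := fun _ _ _ => rfl }⟩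
  have heq : f₁ = f₂ := h.hom_ext f₁ f₂
  have : (⟨true⟩ : ULift Bool) = ⟨false⟩ :=
    congrArg (fun (n : QS hOre hJ X i ⟶ KB) => n.hom.app (op c) ⟨x, hx⟩) heq
  exact Bool.noConfusion (congrArg ULift.down this)

theorem QS_mono_cases (i : Index X.val hOre) (Y : Sheaf J (Type u))
    (m : Y ⟶ QS hOre hJ X i) (hm : Mono m) :
    Nonempty (IsInitial Y) ∨ IsIso m := by
  by_cases hY : ∀ (c : Cᵒᵖ), Y.val.obj c → False
  · left
    refine ⟨IsInitial.ofUniqueHom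
      (fun Z => ⟨{ app := fun c => TypeCat.ofHom fun y => (hY c y).elim,
                   naturality := by intro c d f; ext y; exact (hY c y).elim }⟩) ?_⟩
    intro Z g
    apply Sheaf.hom_ext
    apply NatTrans.ext
    funext c; ext y
    exact (hY c y).elim
  · right
    have hmono : Mono m.hom := (sheafToPresheaf J (Type u)).map_mono m
    have hinj : ∀ c, Function.Injective (m.hom.app c) := by
      intro c
      rw [← CategoryTheory.mono_iff_injective]
      exact (NatTrans.mono_iff_mono_app m.hom).1 hmono c
    rw [not_forall] at hY
    obtain ⟨c₀, hc₀⟩ := hY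
    rw [not_forall] at hc₀
    obtain ⟨y₀, -⟩ := hc₀
    -- surjectivity of each component
    have hsurj : ∀ c, Function.Surjective (m.hom.app c) := by
      intro c x
      obtain ⟨xv, hx⟩ := x
      have hz := (m.hom.app c₀ y₀).2
      obtain ⟨e, f, g, hfg⟩ := Quotient.exact (hx.trans hz.symm)
      obtain ⟨y₁, hy₁⟩ : ∃ y₁ : Y.val.obj (op e),
          m.hom.app (op e) y₁ = (QS hOre hJ X i).val.map f.op ⟨xv, hx⟩ := by
        refine ⟨Y.val.map g.op y₀, ?_⟩
        apply Subtype.ext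
        have hnat := NatTrans.naturality_apply m.hom g.op y₀
        have : (m.hom.app (op e) (Y.val.map g.op y₀)).1 =
            X.val.map g.op (m.hom.app c₀ y₀).1 := congrArg Subtype.val hnat
        rw [this]
        exact hfg.symm
      have key : ∀ (Z : C) (a₁ a₂ : Z ⟶ e), a₁ ≫ f = a₂ ≫ f →
          Y.val.map a₁.op y₁ = Y.val.map a₂.op y₁ := by
        intro Z a₁ a₂ ha
        apply hinj (op Z)
        rw [FunctorToTypes.naturality, FunctorToTypes.naturality, hy₁]
        apply Subtype.ext
        show X.val.map a₁.op (X.val.map f.op xv) = X.val.map a₂.op (X.val.map f.op xv)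
        simp only [← FunctorToTypes.map_comp_apply, ← op_comp, ha]
      -- the covering sieve generated by f
      let S : Sieve c.unop :=
        { arrows := fun Z h => ∃ a : Z ⟶ e, h = a ≫ f
          downward_closed := by rintro Z Z' h ⟨a, rfl⟩ g'; exact ⟨g' ≫ a, by simp⟩ }
      have hS : S ∈ J c.unop := (hJ c.unop S).2 ⟨e, f, ⟨𝟙 e, (Category.id_comp f).symm⟩⟩
      -- compatible family on Y
      let z : Presieve.FamilyOfElements Y.val S.arrows :=
        fun Z h hh => Y.val.map (Classical.choose hh).op y₁
      have hz : z.Compatible := by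
        intro Z₁ Z₂ W g₁ g₂ h₁ h₂ hh₁ hh₂ comm
        show Y.val.map g₁.op (Y.val.map (Classical.choose hh₁).op y₁) =
          Y.val.map g₂.op (Y.val.map (Classical.choose hh₂).op y₁)
        rw [← FunctorToTypes.map_comp_apply, ← FunctorToTypes.map_comp_apply,
          ← op_comp, ← op_comp]
        exact key W _ _ (by
          rw [Category.assoc, Category.assoc, ← Classical.choose_spec hh₁,
            ← Classical.choose_spec hh₂, comm])
      obtain ⟨y, hy, -⟩ := ((isSheaf_iff_isSheaf_of_type _ _).1 Y.cond) S hS z hz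
      refine ⟨y, ?_⟩
      -- m y and x agree on the covering sieve S, hence are equal
      have hQ := ((isSheaf_iff_isSheaf_of_type _ _).1 (QS hOre hJ X i).cond) S hS
      let w : Presieve.FamilyOfElements (QS hOre hJ X i).val S.arrows :=
        fun Z h hh => (QS hOre hJ X i).val.map h.op ⟨xv, hx⟩
      have hw : w.Compatible := by
        intro Z₁ Z₂ W g₁ g₂ h₁ h₂ hh₁ hh₂ comm
        show (QS hOre hJ X i).val.map g₁.op ((QS hOre hJ X i).val.map h₁.op ⟨xv, hx⟩) =
          (QS hOre hJ X i).val.map g₂.op ((QS hOre hJ X i).val.map h₂.op ⟨xv, hx⟩)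
        apply Subtype.ext
        show X.val.map g₁.op (X.val.map h₁.op xv) = X.val.map g₂.op (X.val.map h₂.op xv)
        simp only [← FunctorToTypes.map_comp_apply, ← op_comp, comm]
      have ham1 : w.IsAmalgamation (m.hom.app c y) := by
        intro Z h hh
        show (QS hOre hJ X i).val.map h.op (m.hom.app c y) = w h hh
        rw [← FunctorToTypes.naturality, hy h hh]
        show m.hom.app (op Z) (Y.val.map (Classical.choose hh).op y₁) = _
        rw [FunctorToTypes.naturality, hy₁]
        apply Subtype.ext
        show X.val.map (Classical.choose hh).op (X.val.map f.op xv) = X.val.map h.op xv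
        simp only [← FunctorToTypes.map_comp_apply, ← op_comp, ← Classical.choose_spec hh]
      have ham2 : w.IsAmalgamation (⟨xv, hx⟩ : (QS hOre hJ X i).val.obj c) :=
        fun Z h hh => rfl
      exact hQ.isSeparatedFor w (m.hom.app c y) ⟨xv, hx⟩ ham1 ham2
    have : ∀ c, IsIso (m.hom.app c) := by
      intro c
      rw [CategoryTheory.isIso_iff_bijective]
      exact ⟨hinj c, hsurj c⟩
    haveI : IsIso ((sheafToPresheaf J (Type u)).map m) := NatIso.isIso_of_isIso_app m.hom
    exact isIso_of_reflects_iso m (sheafToPresheaf J (Type u))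

end Main

end AtomicAux

end AtomicAuxSection

/-- If `C` satisfies the right Ore condition and `J` is the atomic topology on `C`,
then `Sh(C, J)` is an atomic topos: every object is a coproduct of atoms. -/
theorem atomicTopology_sheaves_atomic (C : Type u) [SmallCategory C]
    (hOre : RightOreCondition C) (J : GrothendieckTopology C)
    (hJ : IsAtomicTopology J) :
    ∀ X : Sheaf J (Type u), ∃ (I : Type u) (f : I → Sheaf J (Type u)),
      (∀ i, IsAtomObj (f i)) ∧ Nonempty (X ≅ ∐ f) := by
  intro X
  refine ⟨AtomicAux.Index X.val hOre, AtomicAux.QS hOre hJ X,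
    fun i => ⟨AtomicAux.QS_not_initial hOre hJ X i,
      fun Y m hm => AtomicAux.QS_mono_cases hOre hJ X i Y m hm⟩, ?_⟩
  exact ⟨(AtomicAux.isColimit_theCofan hOre hJ X).coconePointUniqueUpToIso
    (colimit.isColimit (Discrete.functor (AtomicAux.QS hOre hJ X)))⟩
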